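/- Let $\alpha \in (0,1)$, let $v_* \in \mathbb{R}^3$, and let $\sigma$ be a unit vector in $\mathbb{R}^3$. Define $T : \mathbb{R}^3 \setminus \{v_*\} \to \mathbb{R}^3$ by $T(v) = v_* + \alpha(v - v_*) + (1-\alpha)|v - v_*|\,\sigma$. Then $T$ is differentiable at every $v \neq v_*$ and the determinant of its derivative equals $\alpha^2\big(\alpha + (1-\alpha)\, \widehat{u}\cdot\sigma\big)$, where $\widehat{u} = \frac{v - v_*}{|v-v_*|}$. -/

import Mathlib

open scoped RealInnerProductSpace

theorem collision_map_jacobian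
    (α : ℝ) (hα0 : 0 < α) (hα1 : α < 1)
    (vs σ : EuclideanSpace ℝ (Fin 3)) (hσ : ‖σ‖ = 1)
    (T : EuclideanSpace ℝ (Fin 3) → EuclideanSpace ℝ (Fin 3))
    (hT : ∀ v, T v = vs + α • (v - vs) + ((1 - α) * ‖v - vs‖) • σ) :
    ∀ v, v ≠ vs → DifferentiableAt ℝ T v ∧
      (fderiv ℝ T v).det =
        α ^ 2 * (α + (1 - α) * inner ℝ ((‖v - vs‖⁻¹ : ℝ) • (v - vs)) σ) := by
  intro v hv
  set u : EuclideanSpace ℝ (Fin 3) := v - vs with hu_def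
  have hu : u ≠ 0 := sub_ne_zero.2 hv
  have hnu : ‖u‖ ≠ 0 := norm_ne_zero_iff.2 hu
  have hnu2 : ‖u‖ ^ 2 ≠ 0 := pow_ne_zero _ hnu
  -- derivative of the norm
  have hsub : HasFDerivAt (fun w : EuclideanSpace ℝ (Fin 3) => w - vs) (ContinuousLinearMap.id ℝ (EuclideanSpace ℝ (Fin 3))) v := by
    simpa using (hasFDerivAt_id v).sub_const vs
  have hsq : HasFDerivAt (fun w : EuclideanSpace ℝ (Fin 3) => ‖w - vs‖ ^ 2)
      ((2 : ℕ) • (innerSL ℝ u).comp (ContinuousLinearMap.id ℝ (EuclideanSpace ℝ (Fin 3)))) v := hsub.norm_sq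
  have hnormfun : (fun w : EuclideanSpace ℝ (Fin 3) => ‖w - vs‖) = fun w : EuclideanSpace ℝ (Fin 3) => Real.sqrt (‖w - vs‖ ^ 2) := by
    funext w
    rw [Real.sqrt_sq (norm_nonneg _)]
  have hnorm : HasFDerivAt (fun w : EuclideanSpace ℝ (Fin 3) => ‖w - vs‖)
      ((1 / (2 * Real.sqrt (‖u‖ ^ 2))) • ((2 : ℕ) • (innerSL ℝ u).comp (ContinuousLinearMap.id ℝ (EuclideanSpace ℝ (Fin 3))))) v := by
    rw [hnormfun]
    exact hsq.sqrt hnu2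
  have hnorm' : HasFDerivAt (fun w : EuclideanSpace ℝ (Fin 3) => ‖w - vs‖) ((‖u‖⁻¹ : ℝ) • innerSL ℝ u) v := by
    refine hnorm.congr_fderiv ?_
    symm
    rw [Real.sqrt_sq (norm_nonneg _)]
    ext w
    simp only [ContinuousLinearMap.smul_apply, ContinuousLinearMap.coe_smul', Pi.smul_apply,
      ContinuousLinearMap.coe_comp', Function.comp_apply, ContinuousLinearMap.coe_id', id,
      nsmul_eq_mul]
    field_simp
    ring
  -- derivative of T
  set A : EuclideanSpace ℝ (Fin 3) →L[ℝ] EuclideanSpace ℝ (Fin 3) :=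
    α • ContinuousLinearMap.id ℝ (EuclideanSpace ℝ (Fin 3)) + (((1 - α) * ‖u‖⁻¹) • innerSL ℝ u).smulRight σ with hA
  have hTfun : T = fun w : EuclideanSpace ℝ (Fin 3) => vs + α • (w - vs) + ((1 - α) * ‖w - vs‖) • σ := funext hT
  have hTd : HasFDerivAt T A v := by
    rw [hTfun]
    have h1 : HasFDerivAt (fun w : EuclideanSpace ℝ (Fin 3) => α • (w - vs)) (α • ContinuousLinearMap.id ℝ (EuclideanSpace ℝ (Fin 3))) v :=
      hsub.const_smul α
    have h2 : HasFDerivAt (fun w : EuclideanSpace ℝ (Fin 3) => ((1 - α) * ‖w - vs‖) • σ)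
        ((((1 - α) * ‖u‖⁻¹) • innerSL ℝ u).smulRight σ) v := by
      have h3 : HasFDerivAt (fun w : EuclideanSpace ℝ (Fin 3) => (1 - α) * ‖w - vs‖)
          ((1 - α) • ((‖u‖⁻¹ : ℝ) • innerSL ℝ u)) v := hnorm'.const_mul (1 - α)
      have := h3.smul_const σ
      refine this.congr_fderiv ?_
      rw [smul_smul]
    have := (h1.const_add vs).add h2
    exact this
  have hdiff : DifferentiableAt ℝ T v := hTd.differentiableAt
  refine ⟨hdiff, ?_⟩
  rw [hTd.fderiv]
  -- pick an orthonormal basis with b 0 = û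
  have hcard : Module.finrank ℝ (EuclideanSpace ℝ (Fin 3)) = Fintype.card (Fin 3) := by
    simp [finrank_euclideanSpace]
  have horth : Orthonormal ℝ (Set.restrict {(0 : Fin 3)} (fun _ => (‖u‖⁻¹ : ℝ) • u)) := by
    constructor
    · rintro ⟨i, hi⟩
      show ‖(‖u‖⁻¹ : ℝ) • u‖ = 1
      rw [norm_smul, norm_inv, norm_norm, inv_mul_cancel₀ hnu]
    · rintro ⟨i, hi⟩ ⟨j, hj⟩ hij
      exact absurd (Subtype.ext ((Set.mem_singleton_iff.1 hi).trans
        (Set.mem_singleton_iff.1 hj).symm)) hij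
  obtain ⟨b, hb⟩ := horth.exists_orthonormalBasis_extension_of_card_eq hcard
  have hb0 : b 0 = (‖u‖⁻¹ : ℝ) • u := hb 0 rfl
  have hbi : ∀ i j : Fin 3, ⟪b i, b j⟫ = if i = j then 1 else 0 := fun i j =>
    orthonormal_iff_ite.1 b.orthonormal i j
  -- inner products with u
  have hiu : ∀ j : Fin 3, ⟪u, b j⟫ = if (0 : Fin 3) = j then ‖u‖ else 0 := by
    intro j
    have : u = ‖u‖ • b 0 := by
      rw [hb0, smul_smul, mul_inv_cancel₀ hnu, one_smul]
    have h1 : ⟪u, b j⟫ = ‖u‖ * ⟪b 0, b j⟫ := by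
      conv_lhs => rw [this]
      rw [real_inner_smul_left]
    rw [h1, hbi]
    split <;> simp
  -- compute the matrix entries
  have hAapp : ∀ w : EuclideanSpace ℝ (Fin 3), A w = α • w + ((1 - α) * ‖u‖⁻¹ * ⟪u, w⟫) • σ := by
    intro w
    simp [hA, ContinuousLinearMap.smulRight_apply, mul_comm]
  have hentry : ∀ i j : Fin 3, LinearMap.toMatrix b.toBasis b.toBasis (A : EuclideanSpace ℝ (Fin 3) →ₗ[ℝ] EuclideanSpace ℝ (Fin 3)) i j =
      α * (if i = j then 1 else 0) +
        ((1 - α) * ‖u‖⁻¹ * (if (0 : Fin 3) = j then ‖u‖ else 0)) * ⟪b i, σ⟫ := by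
    intro i j
    rw [LinearMap.toMatrix_apply]
    rw [show ((A : EuclideanSpace ℝ (Fin 3) →ₗ[ℝ] EuclideanSpace ℝ (Fin 3)) (b.toBasis j)) = A (b j) by simp [b.coe_toBasis]
      , hAapp]
    rw [OrthonormalBasis.coe_toBasis_repr_apply, OrthonormalBasis.repr_apply_apply]
    rw [inner_add_right, real_inner_smul_right, real_inner_smul_right, hbi, hiu]
  -- determinant
  rw [ContinuousLinearMap.det, ← LinearMap.det_toMatrix b.toBasis, Matrix.det_fin_three]
  have h00 : (inner ℝ ((‖v - vs‖⁻¹ : ℝ) • (v - vs)) σ : ℝ) = ⟪b 0, σ⟫ := by rw [hb0]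
  rw [h00]
  simp only [hentry]
  set s0 : ℝ := ⟪b 0, σ⟫ with hs0
  set s1 : ℝ := ⟪b 1, σ⟫ with hs1
  set s2 : ℝ := ⟪b 2, σ⟫ with hs2
  have e1 : ((0 : Fin 3) = 1) = False := by simp [Fin.ext_iff]
  have e2 : ((0 : Fin 3) = 2) = False := by simp [Fin.ext_iff]
  have e3 : ((1 : Fin 3) = 0) = False := by simp [Fin.ext_iff]
  have e4 : ((1 : Fin 3) = 2) = False := by simp [Fin.ext_iff]
  have e5 : ((2 : Fin 3) = 0) = False := by simp [Fin.ext_iff]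
  have e6 : ((2 : Fin 3) = 1) = False := by simp [Fin.ext_iff]
  simp only [e1, e2, e3, e4, e5, e6, if_true, if_false, if_pos rfl, mul_zero, zero_mul,
    mul_one, add_zero, zero_add, mul_zero]
  field_simp
  ring
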